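/- Let r_1 < r_2 and n_1, n_2, k be positive integers with (r_1+1) | n_1, and set m = n_1/(r_1+1), n' = n_2 + (r_2+1)m, k' = k + (r_2−r_1)m. Suppose there exists a linear [n', k', d]_q code C in which every coordinate has locality r_2, whose minimum distance satisfies d = n' − k' + 2 − ⌈k'/r_2⌉, and which possesses m pairwise disjoint sets R_1,…,R_m ⊆ {1,…,n'}, each of size r_2+1, such that for each i there exist coefficients λ_j ∈ F_q\{0} (j ∈ R_i) with Σ_{j∈R_i} λ_j c_j = 0 for all c ∈ C. Then there exists a linear code over F_q of length n_1 + n_2, dimension at least k, and minimum Hamming distance at least d, whose coordinates admit a partition into a set of n_1 coordinates each having locality r_1 and a set of n_2 coordinates each having locality r_2; moreover d = n_1 + n_2 − k + 2 − m − ⌈(k − r_1 m)/r_2⌉. -/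

import Mathlib

open Finset

/-- `C` is a linear `[n,k,d]_q` code over `F`: it has `F`-dimension `k` and its minimum
Hamming distance (least Hamming weight of a nonzero codeword) equals `d`. -/
def IsLinearCode (F : Type*) [Field F] [DecidableEq F] {n : ℕ}
    (C : Submodule F (Fin n → F)) (k d : ℕ) : Prop :=
  Module.finrank F C = k ∧
    (∀ c ∈ C, c ≠ 0 → d ≤ hammingNorm c) ∧
    ∃ c ∈ C, c ≠ 0 ∧ hammingNorm c = d

/-- Coordinate `i` of the code `C` has locality `r`. -/
def HasLocality (F : Type*) [Field F] {n : ℕ} (C : Submodule F (Fin n → F))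
    (i : Fin n) (r : ℕ) : Prop :=
  ∃ R : Finset (Fin n), i ∉ R ∧ R.card ≤ r ∧
    ∃ lam : Fin n → F, ∀ c ∈ C, c i = ∑ j ∈ R, lam j * c j

/-- Coordinate `i` of the code `C` has locality `r` with a repair set contained in `S`. -/
def HasLocalityIn (F : Type*) [Field F] {n : ℕ} (C : Submodule F (Fin n → F))
    (i : Fin n) (r : ℕ) (S : Finset (Fin n)) : Prop :=
  ∃ R : Finset (Fin n), R ⊆ S ∧ i ∉ R ∧ R.card ≤ r ∧
    ∃ lam : Fin n → F, ∀ c ∈ C, c i = ∑ j ∈ R, lam j * c j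

/-- `H(I)`: the `F`-dimension of the image of `C` under the coordinate projection onto `I`. -/
noncomputable def projDim (F : Type*) [Field F] {n : ℕ}
    (C : Submodule F (Fin n → F)) (I : Finset (Fin n)) : ℕ :=
  Module.finrank F (C.map (LinearMap.funLeft F F (fun i : {x // x ∈ I} => (i : Fin n))))

/-- `k_opt^{(q)}(n,d)`: the largest dimension of a linear code of length `n` over `F`
with minimum Hamming distance at least `d`. -/
noncomputable def kopt (F : Type*) [Field F] [DecidableEq F] (n d : ℕ) : ℕ :=
  sSup {k | ∃ C : Submodule F (Fin n → F), Module.finrank F C = k ∧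
    ∀ c ∈ C, c ≠ 0 → d ≤ hammingNorm c}

theorem stmt5 {F : Type*} [Field F] [Fintype F] [DecidableEq F]
    {n₁ n₂ k d r₁ r₂ m n' k' : ℕ}
    (hr₁ : 0 < r₁) (hr : r₁ < r₂) (hn₁ : 0 < n₁) (hn₂ : 0 < n₂) (hk : 0 < k)
    (hdvd : (r₁ + 1) ∣ n₁) (hm : m = n₁ / (r₁ + 1))
    (hn' : n' = n₂ + (r₂ + 1) * m) (hk' : k' = k + (r₂ - r₁) * m)
    (C : Submodule F (Fin n' → F)) (hC : IsLinearCode F C k' d)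
    (hloc : ∀ i : Fin n', HasLocality F C i r₂)
    (hd : (d : ℤ) = (n' : ℤ) - k' + 2 - ⌈(k' : ℚ) / (r₂ : ℚ)⌉)
    (Rs : ℕ → Finset (Fin n'))
    (hRdisj : ∀ i j, i < j → j < m → Disjoint (Rs i) (Rs j))
    (hRcard : ∀ i < m, (Rs i).card = r₂ + 1)
    (hRzero : ∀ i < m, ∃ lam : Fin n' → F, (∀ j ∈ Rs i, lam j ≠ 0) ∧
      ∀ c ∈ C, ∑ j ∈ Rs i, lam j * c j = 0) :
    (∃ C' : Submodule F (Fin (n₁ + n₂) → F),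
      k ≤ Module.finrank F C' ∧
      (∀ c ∈ C', c ≠ 0 → d ≤ hammingNorm c) ∧
      ∃ A B : Finset (Fin (n₁ + n₂)), Disjoint A B ∧ A ∪ B = Finset.univ ∧
        A.card = n₁ ∧ B.card = n₂ ∧
        (∀ x ∈ A, HasLocality F C' x r₁) ∧
        (∀ x ∈ B, HasLocality F C' x r₂)) ∧
    (d : ℤ) = (n₁ : ℤ) + n₂ - k + 2 - m - ⌈((k : ℚ) - (r₁ : ℚ) * m) / (r₂ : ℚ)⌉ := by
  classical
  have hn₁m : n₁ = (r₁ + 1) * m := by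
    rw [hm]; exact (Nat.mul_div_cancel' hdvd).symm
  set s := r₂ - r₁ with hs
  have hspos : 0 < s := by omega
  have hsm : m * s + (r₁ + 1) * m = (r₂ + 1) * m := by
    have hs' : r₁ + s = r₂ := by omega
    rw [← hs']; ring
  have hms : m * s = s * m := mul_comm m s
  constructor
  · -- the construction
    -- choose the deleted subsets
    have hDi0 : ∀ i, ∃ t, (i < m → t ⊆ Rs i ∧ t.card = s) := by
      intro i
      by_cases hi : i < m
      · obtain ⟨t, ht, htc⟩ := Finset.exists_subset_card_eq (s := Rs i) (n := s)
          (by rw [hRcard i hi]; omega)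
        exact ⟨t, fun _ => ⟨ht, htc⟩⟩
      · exact ⟨∅, fun h => absurd h hi⟩
    choose Di hDi using hDi0
    have hRdisj' : ∀ i j, i < m → j < m → i ≠ j → Disjoint (Rs i) (Rs j) := by
      intro i j hi hj hij
      rcases lt_or_gt_of_ne hij with h | h
      · exact hRdisj i j h hj
      · exact (hRdisj j i h hi).symm
    set D : Finset (Fin n') := (Finset.range m).biUnion Di with hD
    have hDcard : D.card = m * s := by
      rw [hD, Finset.card_biUnion]
      · rw [Finset.sum_congr rfl (fun i hi => (hDi i (Finset.mem_range.mp hi)).2)]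
        simp [Finset.sum_const, mul_comm]
      · intro i hi j hj hij
        exact ((hRdisj' i j (Finset.mem_range.mp hi) (Finset.mem_range.mp hj) hij).mono
          (hDi i (Finset.mem_range.mp hi)).1 (hDi j (Finset.mem_range.mp hj)).1)
    set T : Finset (Fin n') := Finset.univ \ D with hT
    have hTmem : ∀ j, j ∈ T ↔ j ∉ D := by intro j; simp [hT]
    have hTcard : T.card = n₁ + n₂ := by
      rw [hT, Finset.card_sdiff_of_subset (Finset.subset_univ _), Finset.card_univ,
        Fintype.card_fin, hDcard]
      omega
    set e : Fin (n₁ + n₂) → Fin n' := fun y => (T.orderIsoOfFin hTcard y : Fin n') with he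
    have he_inj : Function.Injective e := by
      intro a b hab
      exact (T.orderIsoOfFin hTcard).injective (Subtype.ext hab)
    have he_memT : ∀ y, e y ∈ T := by intro y; exact (T.orderIsoOfFin hTcard y).2
    have he_surj : ∀ j ∈ T, ∃ y, e y = j := by
      intro j hj
      refine ⟨(T.orderIsoOfFin hTcard).symm ⟨j, hj⟩, ?_⟩
      show ((T.orderIsoOfFin hTcard) ((T.orderIsoOfFin hTcard).symm ⟨j, hj⟩) : Fin n') = j
      rw [OrderIso.apply_symm_apply]
    have himg : ∀ S : Finset (Fin n'), S ⊆ T →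
        (Finset.univ.filter fun y => e y ∈ S).image e = S := by
      intro S hS
      ext j
      simp only [Finset.mem_image, Finset.mem_filter, Finset.mem_univ, true_and]
      constructor
      · rintro ⟨y, hy, rfl⟩; exact hy
      · intro hj
        obtain ⟨y, rfl⟩ := he_surj j (hS hj)
        exact ⟨y, hj, rfl⟩
    have hcardS : ∀ S : Finset (Fin n'), S ⊆ T →
        (Finset.univ.filter fun y => e y ∈ S).card = S.card := by
      intro S hS
      conv_rhs => rw [← himg S hS]
      rw [Finset.card_image_of_injective _ he_inj]
    have hsum : ∀ (S : Finset (Fin n')) (_ : S ⊆ T) (g : Fin n' → F),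
        ∑ y ∈ Finset.univ.filter (fun y => e y ∈ S), g (e y) = ∑ j ∈ S, g j := by
      intro S hS g
      conv_rhs => rw [← himg S hS]
      rw [Finset.sum_image (fun a _ b _ h => he_inj h)]
    -- the shortened code
    set ψ : (Fin n' → F) →ₗ[F] ({x // x ∈ D} → F) :=
      LinearMap.funLeft F F (Subtype.val : {x // x ∈ D} → Fin n') with hψ
    set K : Submodule F (Fin n' → F) := C ⊓ LinearMap.ker ψ with hK
    have hKmem : ∀ c, c ∈ K ↔ c ∈ C ∧ ∀ j ∈ D, c j = 0 := by
      intro c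
      rw [hK, Submodule.mem_inf, LinearMap.mem_ker]
      constructor
      · rintro ⟨h1, h2⟩
        refine ⟨h1, fun j hj => ?_⟩
        have := congrFun h2 ⟨j, hj⟩
        simpa [hψ] using this
      · rintro ⟨h1, h2⟩
        refine ⟨h1, funext fun j => ?_⟩
        simpa [hψ] using h2 j.1 j.2
    set φ : (Fin n' → F) →ₗ[F] (Fin (n₁ + n₂) → F) := LinearMap.funLeft F F e with hφ
    have hφ_apply : ∀ (c : Fin n' → F) (y), φ c y = c (e y) := by
      intro c y; simp [hφ]
    have hφinj : ∀ c ∈ K, φ c = 0 → c = 0 := by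
      intro c hc h0
      funext j
      by_cases hj : j ∈ D
      · exact ((hKmem c).mp hc).2 j hj
      · obtain ⟨y, rfl⟩ := he_surj j ((hTmem j).mpr hj)
        have := congrFun h0 y
        simpa [hφ] using this
    refine ⟨K.map φ, ?_, ?_, ?_⟩
    · -- dimension bound
      have hrk : Module.finrank F (K.map φ) = Module.finrank F K := by
        rw [← LinearMap.range_domRestrict K φ]
        apply LinearMap.finrank_range_of_inj
        intro a b hab
        apply Subtype.ext
        have hmem : (a : Fin n' → F) - b ∈ K := K.sub_mem a.2 b.2
        have : φ ((a : Fin n' → F) - b) = 0 := by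
          rw [map_sub]
          simpa [LinearMap.domRestrict_apply] using sub_eq_zero.mpr hab
        have := hφinj _ hmem this
        exact sub_eq_zero.mp this
      have hkerψ : Module.finrank F (LinearMap.ker ψ) + m * s = n' := by
        have h1 := LinearMap.finrank_range_add_finrank_ker ψ
        have h2 : LinearMap.range ψ = ⊤ := LinearMap.range_eq_top.mpr
          (LinearMap.funLeft_surjective_of_injective F F _ Subtype.val_injective)
        rw [h2] at h1
        have h3 : Module.finrank F ({x // x ∈ D} → F) = m * s := by
          rw [Module.finrank_pi, Fintype.card_coe, hDcard]
        have h4 : Module.finrank F (Fin n' → F) = n' := by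
          rw [Module.finrank_pi, Fintype.card_fin]
        rw [h4, finrank_top, h3] at h1
        omega
      have hsup := Submodule.finrank_sup_add_finrank_inf_eq C (LinearMap.ker ψ)
      have hsuple : Module.finrank F ↥(C ⊔ LinearMap.ker ψ) ≤ n' := by
        have := Submodule.finrank_le (C ⊔ LinearMap.ker ψ)
        rwa [Module.finrank_pi, Fintype.card_fin] at this
      rw [hrk]
      have hCk : Module.finrank F C = k' := hC.1
      have hKeq : Module.finrank F K = Module.finrank F ↥(C ⊓ LinearMap.ker ψ) := rfl
      omega
    · -- distance
      intro c' hc' hc'ne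
      obtain ⟨c, hcK, rfl⟩ := Submodule.mem_map.mp hc'
      have hcC : c ∈ C := ((hKmem c).mp hcK).1
      have hcne : c ≠ 0 := by
        intro h; exact hc'ne (by rw [h, map_zero])
      have hnorm : hammingNorm (φ c) = hammingNorm c := by
        have hSsub : (Finset.univ.filter fun j => c j ≠ 0) ⊆ T := by
          intro j hj
          simp only [Finset.mem_filter] at hj
          rw [hTmem]
          intro hjD
          exact hj.2 (((hKmem c).mp hcK).2 j hjD)
        have : (Finset.univ.filter fun y => φ c y ≠ 0)
            = (Finset.univ.filter fun y => e y ∈ (Finset.univ.filter fun j => c j ≠ 0)) := by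
          ext y; simp [hφ_apply]
        unfold hammingNorm
        rw [this, hcardS _ hSsub]
      rw [hnorm]
      exact hC.2.1 c hcC hcne
    · -- locality
      set A : Finset (Fin (n₁ + n₂)) :=
        Finset.univ.filter (fun y => ∃ i, i < m ∧ e y ∈ Rs i) with hA
      set B : Finset (Fin (n₁ + n₂)) :=
        Finset.univ.filter (fun y => ¬ ∃ i, i < m ∧ e y ∈ Rs i) with hB
      have hDiD : ∀ i, i < m → Di i ⊆ D := by
        intro i hi x hx
        rw [hD]
        exact Finset.mem_biUnion.mpr ⟨i, Finset.mem_range.mpr hi, hx⟩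
      have hRsT : ∀ i, i < m → Rs i \ Di i ⊆ T := by
        intro i hi x hx
        rw [Finset.mem_sdiff] at hx
        rw [hTmem]
        intro hxD
        rw [hD, Finset.mem_biUnion] at hxD
        obtain ⟨i', hi', hx'⟩ := hxD
        rw [Finset.mem_range] at hi'
        by_cases hii : i' = i
        · exact hx.2 (hii ▸ hx')
        · exact absurd ((hDi i' hi').1 hx')
            (Finset.disjoint_left.mp (hRdisj' i i' hi hi' (Ne.symm hii)) hx.1)
      have hAcard : A.card = n₁ := by
        have hSA : A = Finset.univ.filter
            (fun y => e y ∈ (Finset.range m).biUnion (fun i => Rs i \ Di i)) := by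
          rw [hA]
          ext y
          simp only [Finset.mem_filter, Finset.mem_univ, true_and, Finset.mem_biUnion,
            Finset.mem_range]
          constructor
          · rintro ⟨i, hi, hyi⟩
            refine ⟨i, hi, Finset.mem_sdiff.mpr ⟨hyi, fun hcon => ?_⟩⟩
            have : e y ∈ D := hDiD i hi hcon
            exact ((hTmem (e y)).mp (he_memT y)) this
          · rintro ⟨i, hi, hyi⟩
            exact ⟨i, hi, (Finset.mem_sdiff.mp hyi).1⟩
        rw [hSA, hcardS]
        · rw [Finset.card_biUnion]
          · have : ∀ i ∈ Finset.range m, (Rs i \ Di i).card = r₁ + 1 := by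
              intro i hi
              rw [Finset.mem_range] at hi
              rw [Finset.card_sdiff_of_subset (hDi i hi).1, hRcard i hi, (hDi i hi).2]
              omega
            rw [Finset.sum_congr rfl this]
            simp [Finset.sum_const, hn₁m, mul_comm]
          · intro i hi j hj hij
            rw [Finset.mem_coe, Finset.mem_range] at hi hj
            exact (hRdisj' i j hi hj hij).mono Finset.sdiff_subset Finset.sdiff_subset
        · intro x hx
          rw [Finset.mem_biUnion] at hx
          obtain ⟨i, hi, hxi⟩ := hx
          exact hRsT i (Finset.mem_range.mp hi) hxi
      refine ⟨A, B, ?_, ?_, hAcard, ?_, ?_, ?_⟩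
      · rw [hA, hB]; exact Finset.disjoint_filter_filter_not _ _ _
      · rw [hA, hB]; exact Finset.filter_union_filter_not_eq (p := fun y => ∃ i, i < m ∧ e y ∈ Rs i) _
      · -- card B
        have htot := Finset.card_filter_add_card_filter_not
          (s := (Finset.univ : Finset (Fin (n₁ + n₂))))
          (p := fun y => ∃ i, i < m ∧ e y ∈ Rs i)
        rw [Finset.card_univ, Fintype.card_fin] at htot
        have : A.card + B.card = n₁ + n₂ := htot
        omega
      · -- locality r₁ on A
        intro x hxA
        rw [hA, Finset.mem_filter] at hxA
        obtain ⟨-, i, hi, hxi⟩ := hxA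
        obtain ⟨lam, hlamne, hlamzero⟩ := hRzero i hi
        set j₀ := e x with hj₀
        have hj₀D : j₀ ∉ D := (hTmem j₀).mp (he_memT x)
        have hj₀mem : j₀ ∈ Rs i \ Di i :=
          Finset.mem_sdiff.mpr ⟨hxi, fun h => hj₀D (hDiD i hi h)⟩
        set S₀ := (Rs i \ Di i).erase j₀ with hS₀
        have hS₀T : S₀ ⊆ T := fun z hz => hRsT i hi (Finset.erase_subset _ _ hz)
        have hS₀card : S₀.card = r₁ := by
          rw [hS₀, Finset.card_erase_of_mem hj₀mem, Finset.card_sdiff_of_subset (hDi i hi).1,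
            hRcard i hi, (hDi i hi).2]
          omega
        have hlj₀ : lam j₀ ≠ 0 := hlamne j₀ hxi
        refine ⟨Finset.univ.filter (fun z => e z ∈ S₀), ?_, ?_,
          fun z => -(lam (e z)) / lam j₀, ?_⟩
        · simp only [Finset.mem_filter, Finset.mem_univ, true_and]
          intro hcon
          exact (Finset.notMem_erase j₀ _) hcon
        · rw [hcardS S₀ hS₀T, hS₀card]
        · intro c' hc'
          obtain ⟨c, hcK, rfl⟩ := Submodule.mem_map.mp hc'
          have hcC : c ∈ C := ((hKmem c).mp hcK).1
          have hzeroD : ∀ j ∈ D, c j = 0 := ((hKmem c).mp hcK).2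
          have hsum0 : ∑ j ∈ Rs i, lam j * c j = 0 := hlamzero c hcC
          have hsplit : ∑ j ∈ Rs i, lam j * c j = ∑ j ∈ Rs i \ Di i, lam j * c j := by
            rw [← Finset.sum_sdiff (hDi i hi).1]
            have hz : ∑ j ∈ Di i, lam j * c j = 0 := Finset.sum_eq_zero (fun j hj => by
              rw [hzeroD j (hDiD i hi hj), mul_zero])
            rw [hz, add_zero]
          have hins : Rs i \ Di i = insert j₀ S₀ := (Finset.insert_erase hj₀mem).symm
          have hkey : lam j₀ * c j₀ + ∑ j ∈ S₀, lam j * c j = 0 := by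
            have h0 := hsum0
            rw [hsplit, hins, Finset.sum_insert (Finset.notMem_erase j₀ _)] at h0
            exact h0
          rw [hφ_apply]
          have hrhs : ∑ z ∈ Finset.univ.filter (fun z => e z ∈ S₀),
              (-(lam (e z)) / lam j₀) * (φ c) z
              = ∑ j ∈ S₀, (-(lam j) / lam j₀) * c j := by
            rw [← hsum S₀ hS₀T (fun j => (-(lam j) / lam j₀) * c j)]
            exact Finset.sum_congr rfl (fun z hz => by rw [hφ_apply])
          rw [hrhs]
          have hx : lam j₀ * ∑ j ∈ S₀, (-(lam j) / lam j₀) * c j = lam j₀ * c j₀ := by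
            rw [Finset.mul_sum]
            have hterm : ∀ j ∈ S₀, lam j₀ * ((-(lam j) / lam j₀) * c j) = -(lam j * c j) := by
              intro j hj
              field_simp
            rw [Finset.sum_congr rfl hterm, Finset.sum_neg_distrib]
            linear_combination -hkey
          exact (mul_left_cancel₀ hlj₀ hx).symm
      · -- locality r₂ on B
        intro x hxB
        rw [hB, Finset.mem_filter] at hxB
        obtain ⟨-, hnx⟩ := hxB
        obtain ⟨R, hxR, hRc, lam, hlam⟩ := hloc (e x)
        set S₀ := R ∩ T with hS₀
        have hS₀T : S₀ ⊆ T := Finset.inter_subset_right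
        refine ⟨Finset.univ.filter (fun z => e z ∈ S₀), ?_, ?_, fun z => lam (e z), ?_⟩
        · simp only [Finset.mem_filter, Finset.mem_univ, true_and]
          intro hcon
          exact hxR (Finset.mem_of_mem_inter_left hcon)
        · rw [hcardS S₀ hS₀T]
          exact le_trans (Finset.card_le_card Finset.inter_subset_left) hRc
        · intro c' hc'
          obtain ⟨c, hcK, rfl⟩ := Submodule.mem_map.mp hc'
          have hcC : c ∈ C := ((hKmem c).mp hcK).1
          have hzeroD : ∀ j ∈ D, c j = 0 := ((hKmem c).mp hcK).2
          rw [hφ_apply]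
          have h1 : c (e x) = ∑ j ∈ R, lam j * c j := hlam c hcC
          have h2 : ∑ j ∈ R, lam j * c j = ∑ j ∈ S₀, lam j * c j := by
            symm
            apply Finset.sum_subset Finset.inter_subset_left
            intro j hjR hjS
            have hjD : j ∈ D := by
              by_contra hjD
              exact hjS (Finset.mem_inter.mpr ⟨hjR, (hTmem j).mpr hjD⟩)
            rw [hzeroD j hjD, mul_zero]
          rw [h1, h2, ← hsum S₀ hS₀T (fun j => lam j * c j)]
          exact Finset.sum_congr rfl (fun z _ => by rw [hφ_apply])
  · -- arithmetic identity
    have hr₂Q : (r₂ : ℚ) ≠ 0 := by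
      have : 0 < r₂ := by omega
      exact_mod_cast this.ne'
    have hk'Q : (k' : ℚ) = ((k : ℚ) - r₁ * m) + r₂ * m := by
      rw [hk', hs]
      push_cast [Nat.cast_sub hr.le]
      ring
    have hdiv : ((k' : ℚ)) / r₂ = ((k : ℚ) - r₁ * m) / r₂ + m := by
      rw [hk'Q]
      field_simp
    have hceil : ⌈(k' : ℚ) / r₂⌉ = ⌈((k : ℚ) - (r₁ : ℚ) * m) / r₂⌉ + m := by
      rw [hdiv, Int.ceil_add_natCast]
    rw [hd, hceil]
    have h2 : (n' : ℤ) = n₂ + (r₂ + 1) * m := by exact_mod_cast congrArg (Nat.cast : ℕ → ℤ) hn'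
    have h3 : (k' : ℤ) = k + ((r₂ : ℤ) - r₁) * m := by
      rw [hk', hs]
      push_cast [Nat.cast_sub hr.le]
      ring
    have h4 : (n₁ : ℤ) = ((r₁ : ℤ) + 1) * m := by exact_mod_cast congrArg (Nat.cast : ℕ → ℤ) hn₁m
    rw [h2, h3]
    linarith [h4]
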